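/- Let S = {(x_i, y_i)}_{i=1}^n ⊆ ℝ × {−1,1} be a dataset with x_1 < x_2 < … < x_n, and suppose θ = (w, b, v) satisfies the KKT conditions of the maximum-margin problem for a width-k depth-2 ReLU network on S. Let 1 ≤ a < b ≤ n be such that x_b > x_a ≥ 0 and y_i = 1 for all a ≤ i ≤ b, and let ℐ'_{a,b} = {i : a ≤ i ≤ b, y_i N_θ(x_i) = 1} be enumerated as i_1 < … < i_m. Then there are at most 5 indices ℓ ∈ [m−1] such that N_θ(x) < 1 for some x ∈ [x_{i_ℓ}, x_{i_{ℓ+1}}]. -/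

import Mathlib

open Finset

/-- The ReLU activation function. -/
noncomputable def relu (z : ℝ) : ℝ := max 0 z

/-- A width-`k` depth-2 ReLU network with weights `w`, biases `b`, output weights `v`. -/
noncomputable def NNet {k : ℕ} (w b v : Fin k → ℝ) (x : ℝ) : ℝ :=
  ∑ j : Fin k, v j * relu (w j * x + b j)

/-- `θ = (w, b, v)` satisfies the KKT conditions of the maximum-margin problem
for the dataset `(x i, y i)`. -/
def IsKKT {n k : ℕ} (x y : Fin n → ℝ) (w b v : Fin k → ℝ) : Prop :=
  (∀ i, 1 ≤ y i * NNet w b v (x i)) ∧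
  ∃ (lam : Fin n → ℝ) (sg : Fin n → Fin k → ℝ),
    (∀ i, 0 ≤ lam i) ∧
    (∀ i j, sg i j ∈ Set.Icc (0 : ℝ) 1) ∧
    (∀ i j, 0 < w j * x i + b j → sg i j = 1) ∧
    (∀ i j, w j * x i + b j < 0 → sg i j = 0) ∧
    (∀ i, y i * NNet w b v (x i) ≠ 1 → lam i = 0) ∧
    (∀ j, v j ≠ 0 → w j = ∑ i, lam i * y i * v j * sg i j * x i) ∧
    (∀ j, v j ≠ 0 → b j = ∑ i, lam i * y i * v j * sg i j)

/-- `f` is locally affine at `x`: it agrees with an affine function on a neighborhood of `x`. -/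
def LocallyAffineAt (f : ℝ → ℝ) (x : ℝ) : Prop :=
  ∃ c d : ℝ, ∀ᶠ z in nhds x, f z = c * z + d

/-- `x` is an activation point of the network `(w, b, v)`. -/
def IsActivationPoint {k : ℕ} (w b v : Fin k → ℝ) (x : ℝ) : Prop :=
  ∃ j : Fin k, v j ≠ 0 ∧ w j ≠ 0 ∧ w j * x + b j = 0

/-- The derivative of `f` decreases at `x`: for all sufficiently small `ε > 0`,
the derivative at `x + ε` is smaller than the derivative at `x - ε`. -/
def DerivDecreasesAt (f : ℝ → ℝ) (x : ℝ) : Prop :=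
  ∃ ε₀ > (0 : ℝ), ∀ ε : ℝ, 0 < ε → ε < ε₀ → deriv f (x + ε) < deriv f (x - ε)

/-- The derivative of `f` increases at `x`: for all sufficiently small `ε > 0`,
the derivative at `x - ε` is smaller than the derivative at `x + ε`. -/
def DerivIncreasesAt (f : ℝ → ℝ) (x : ℝ) : Prop :=
  ∃ ε₀ > (0 : ℝ), ∀ ε : ℝ, 0 < ε → ε < ε₀ → deriv f (x - ε) < deriv f (x + ε)

/-! ### Auxiliary lemmas -/

private lemma convexOn_affine (s : Set ℝ) (hs : Convex ℝ s) (a c : ℝ) :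
    ConvexOn ℝ s (fun u => a * u + c) := by
  refine ⟨hs, fun p _ q _ α β hα hβ hαβ => ?_⟩
  simp only [smul_eq_mul]
  apply le_of_eq
  linear_combination (-c) * hαβ

private lemma convexOn_congr {s : Set ℝ} {f g : ℝ → ℝ} (hf : ConvexOn ℝ s f)
    (h : Set.EqOn f g s) : ConvexOn ℝ s g := by
  refine ⟨hf.1, fun p hp q hq α β hα hβ hαβ => ?_⟩
  have hm : α • p + β • q ∈ s := hf.1 hp hq hα hβ hαβ
  rw [← h hm, ← h hp, ← h hq]
  exact hf.2 hp hq hα hβ hαβ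

private lemma convexOn_relu_affine (s : Set ℝ) (hs : Convex ℝ s) (a c : ℝ) :
    ConvexOn ℝ s (fun u => relu (a * u + c)) := by
  have h := (convexOn_const (0 : ℝ) hs).sup (convexOn_affine s hs a c)
  refine convexOn_congr h ?_
  intro u _
  simp [relu, Pi.sup_apply]

private lemma convexOn_finset_sum {ι : Type*} (s : Finset ι) (t : Set ℝ) (ht : Convex ℝ t)
    (f : ι → ℝ → ℝ) (hf : ∀ i ∈ s, ConvexOn ℝ t (f i)) :
    ConvexOn ℝ t (fun u => ∑ i ∈ s, f i u) := by
  classical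
  induction s using Finset.induction with
  | empty => simpa using convexOn_const (0 : ℝ) ht
  | @insert a s ha ih =>
      have h1 : ConvexOn ℝ t (f a) := hf a (Finset.mem_insert_self a s)
      have h2 : ConvexOn ℝ t (fun u => ∑ i ∈ s, f i u) :=
        ih (fun i hi => hf i (Finset.mem_insert_of_mem hi))
      have := h1.add h2
      refine convexOn_congr this ?_
      intro u _
      simp [Finset.sum_insert ha]

/-- Between two points where the network is below 1, with a point of value 1 in between,
there must be an "activation point" of a neuron with negative outer weight. -/
private lemma dip_bad {k : ℕ} (w b v : Fin k → ℝ) {z z' q : ℝ}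
    (hzq : z ≤ q) (hqz' : q ≤ z')
    (hNz : NNet w b v z < 1) (hNz' : NNet w b v z' < 1)
    (hNq : NNet w b v q = 1) :
    ∃ t ∈ Set.Ioo z z', ∃ j, v j < 0 ∧ w j ≠ 0 ∧ w j * t + b j = 0 := by
  by_contra hcon
  push_neg at hcon
  -- hcon : ∀ t ∈ Set.Ioo z z', ∀ j, v j < 0 → w j ≠ 0 → w j * t + b j ≠ 0
  have hconv : ConvexOn ℝ (Set.Icc z z') (NNet w b v) := by
    have hj : ∀ j : Fin k, ConvexOn ℝ (Set.Icc z z')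
        (fun u => v j * relu (w j * u + b j)) := by
      intro j
      rcases le_or_gt 0 (v j) with hv | hv
      · have h1 := (convexOn_relu_affine (Set.Icc z z') (convex_Icc _ _) (w j) (b j)).smul hv
        refine convexOn_congr h1 ?_
        intro u _
        simp [smul_eq_mul]
      · by_cases hw : w j = 0
        · refine convexOn_congr (convexOn_const (v j * relu (b j)) (convex_Icc z z')) ?_
          intro u _
          simp [hw]
        · have hsign : (∀ u ∈ Set.Icc z z', 0 ≤ w j * u + b j) ∨
              (∀ u ∈ Set.Icc z z', w j * u + b j ≤ 0) := by
            by_contra hs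
            push_neg at hs
            obtain ⟨⟨u1, hu1, hu1'⟩, ⟨u2, hu2, hu2'⟩⟩ := hs
            -- hu1' : w j * u1 + b j < 0, hu2' : 0 < w j * u2 + b j
            set t0 := -b j / w j with ht0def
            have ht0 : w j * t0 + b j = 0 := by
              rw [ht0def]
              field_simp
              ring
            refine hcon t0 ?_ j hv hw ht0
            rcases lt_or_gt_of_ne hw with hwneg | hwpos
            · -- w j < 0 : affine map is strictly decreasing, u2 < t0 < u1
              have h1 : u2 < t0 := by
                by_contra hcc
                push_neg at hcc
                nlinarith
              have h2 : t0 < u1 := by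
                by_contra hcc
                push_neg at hcc
                nlinarith
              exact ⟨lt_of_le_of_lt hu2.1 h1, lt_of_lt_of_le h2 hu1.2⟩
            · -- 0 < w j : affine map is strictly increasing, u1 < t0 < u2
              have h1 : u1 < t0 := by
                by_contra hcc
                push_neg at hcc
                nlinarith
              have h2 : t0 < u2 := by
                by_contra hcc
                push_neg at hcc
                nlinarith
              exact ⟨lt_of_le_of_lt hu1.1 h1, lt_of_lt_of_le h2 hu2.2⟩
          rcases hsign with hpos | hneg
          · refine convexOn_congr
              (convexOn_affine (Set.Icc z z') (convex_Icc _ _) (v j * w j) (v j * b j)) ?_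
            intro u hu
            have h0 := hpos u hu
            simp only [relu, max_eq_right h0]
            ring
          · refine convexOn_congr (convexOn_const (0 : ℝ) (convex_Icc z z')) ?_
            intro u hu
            have h0 := hneg u hu
            simp only [relu, max_eq_left h0]
            ring
    have hsum := convexOn_finset_sum Finset.univ (Set.Icc z z') (convex_Icc _ _)
      (fun j u => v j * relu (w j * u + b j)) (fun j _ => hj j)
    refine convexOn_congr hsum ?_
    intro u _
    simp [NNet]
  -- now derive the contradiction from convexity
  have hzq' : z < q := by
    rcases eq_or_lt_of_le hzq with h | h
    · rw [← h] at hNq; linarith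
    · exact h
  have hqz'' : q < z' := by
    rcases eq_or_lt_of_le hqz' with h | h
    · rw [h] at hNq; linarith
    · exact h
  have hzz' : z < z' := lt_trans hzq' hqz''
  have hden : 0 < z' - z := by linarith
  set α := (z' - q) / (z' - z) with hα_def
  set β := (q - z) / (z' - z) with hβ_def
  have hα : 0 < α := div_pos (by linarith) hden
  have hβ : 0 < β := div_pos (by linarith) hden
  have hαβ : α + β = 1 := by
    rw [hα_def, hβ_def]
    field_simp
    ring
  have hcomb : α • z + β • z' = q := by
    rw [hα_def, hβ_def]
    simp only [smul_eq_mul]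
    field_simp
    ring
  have hle := hconv.2 (Set.left_mem_Icc.mpr hzz'.le) (Set.right_mem_Icc.mpr hzz'.le)
    hα.le hβ.le hαβ
  rw [hcomb] at hle
  rw [hNq] at hle
  simp only [smul_eq_mul] at hle
  nlinarith [mul_lt_mul_of_pos_left hNz hα, mul_lt_mul_of_pos_left hNz' hβ]

/-- Two same-orientation (positive-slope) negative neurons cannot both have activation
points inside a positively-labeled region: KKT stationarity contradiction. -/
private lemma pair_contra_pos {n k : ℕ} (x y : Fin n → ℝ) (w b v : Fin k → ℝ)
    (lam : Fin n → ℝ) (sg : Fin n → Fin k → ℝ)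
    (hlam : ∀ i, 0 ≤ lam i)
    (hsg01 : ∀ i j, sg i j ∈ Set.Icc (0 : ℝ) 1)
    (hsg1 : ∀ i j, 0 < w j * x i + b j → sg i j = 1)
    (hsg0 : ∀ i j, w j * x i + b j < 0 → sg i j = 0)
    (hw' : ∀ j, v j ≠ 0 → w j = ∑ i, lam i * y i * v j * sg i j * x i)
    (hb' : ∀ j, v j ≠ 0 → b j = ∑ i, lam i * y i * v j * sg i j)
    (t1 t2 : ℝ) (h12 : t1 < t2)
    (hy1 : ∀ i, t1 ≤ x i → x i ≤ t2 → y i = 1)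
    (hpos : ∀ i, t1 ≤ x i → x i ≤ t2 → 0 < t1 * x i + 1)
    (j1 j2 : Fin k) (hv1 : v j1 < 0) (hv2 : v j2 < 0)
    (hw1 : 0 < w j1) (hw2 : 0 < w j2)
    (hbp1 : w j1 * t1 + b j1 = 0) (hbp2 : w j2 * t2 + b j2 = 0) : False := by
  have hv1ne : v j1 ≠ 0 := ne_of_lt hv1
  have hv2ne : v j2 ≠ 0 := ne_of_lt hv2
  -- the stationarity equations at the activation points
  have hE : ∀ (j : Fin k) (t : ℝ), v j ≠ 0 → w j * t + b j = 0 →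
      ∑ i, lam i * y i * sg i j * (t * x i + 1) = 0 := by
    intro j t hvj h0
    have hrw : w j * t + b j = v j * ∑ i, lam i * y i * sg i j * (t * x i + 1) := by
      rw [hw' j hvj, hb' j hvj, Finset.sum_mul, ← Finset.sum_add_distrib, Finset.mul_sum]
      exact Finset.sum_congr rfl fun i _ => by ring
    rw [h0] at hrw
    rcases mul_eq_zero.mp hrw.symm with h | h
    · exact absurd h hvj
    · exact h
  have hE1 := hE j1 t1 hv1ne hbp1
  have hE2 := hE j2 t2 hv2ne hbp2
  -- the slope of neuron j2 : w j2 = v j2 * A2, so A2 < 0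
  have hA2 : w j2 = v j2 * ∑ i, lam i * y i * sg i j2 * x i := by
    rw [hw' j2 hv2ne, Finset.mul_sum]
    exact Finset.sum_congr rfl fun i _ => by ring
  have hA2neg : (∑ i, lam i * y i * sg i j2 * x i) < 0 := by
    rw [hA2] at hw2
    rcases mul_pos_iff.mp hw2 with ⟨h, _⟩ | ⟨_, h⟩
    · exact absurd h (not_lt.mpr hv2.le)
    · exact h
  -- the telescoping identity
  have hsplit : (∑ i, lam i * y i * sg i j1 * (t1 * x i + 1)) -
      (∑ i, lam i * y i * sg i j2 * (t2 * x i + 1)) =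
      (∑ i, lam i * y i * (sg i j1 - sg i j2) * (t1 * x i + 1)) +
      (t1 - t2) * (∑ i, lam i * y i * sg i j2 * x i) := by
    rw [Finset.mul_sum, ← Finset.sum_sub_distrib, ← Finset.sum_add_distrib]
    exact Finset.sum_congr rfl fun i _ => by ring
  -- each term of the first sum is nonnegative
  have hb1eq : b j1 = -(w j1 * t1) := by linarith
  have hb2eq : b j2 = -(w j2 * t2) := by linarith
  have hterm : ∀ i, 0 ≤ lam i * y i * (sg i j1 - sg i j2) * (t1 * x i + 1) := by
    intro i
    rcases lt_or_ge (x i) t1 with hlt | hge1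
    · have h1 : sg i j1 = 0 := hsg0 i j1 (by nlinarith)
      have h2 : sg i j2 = 0 := hsg0 i j2 (by nlinarith)
      simp [h1, h2]
    · rcases lt_or_ge t2 (x i) with hgt | hle2
      · have h1 : sg i j1 = 1 := hsg1 i j1 (by nlinarith)
        have h2 : sg i j2 = 1 := hsg1 i j2 (by nlinarith)
        simp [h1, h2]
      · have hyi : y i = 1 := hy1 i hge1 hle2
        have hp : 0 < t1 * x i + 1 := hpos i hge1 hle2
        have hd : 0 ≤ sg i j1 - sg i j2 := by
          rcases lt_or_ge (x i) t2 with h | h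
          · have h2 : sg i j2 = 0 := hsg0 i j2 (by nlinarith)
            have := (hsg01 i j1).1
            linarith
          · have hx2 : x i = t2 := le_antisymm hle2 h
            have h1 : sg i j1 = 1 := hsg1 i j1 (by nlinarith)
            have := (hsg01 i j2).2
            linarith
        have hynn : (0 : ℝ) ≤ y i := by rw [hyi]; norm_num
        exact mul_nonneg (mul_nonneg (mul_nonneg (hlam i) hynn) hd) hp.le
  have hgsum : 0 ≤ ∑ i, lam i * y i * (sg i j1 - sg i j2) * (t1 * x i + 1) :=
    Finset.sum_nonneg fun i _ => hterm i
  have hmulpos : 0 < (t1 - t2) * (∑ i, lam i * y i * sg i j2 * x i) :=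
    mul_pos_of_neg_of_neg (by linarith) hA2neg
  linarith [hsplit, hE1, hE2]

/-- The mirrored version: two same-orientation (negative-slope) negative neurons. -/
private lemma pair_contra_neg {n k : ℕ} (x y : Fin n → ℝ) (w b v : Fin k → ℝ)
    (lam : Fin n → ℝ) (sg : Fin n → Fin k → ℝ)
    (hlam : ∀ i, 0 ≤ lam i)
    (hsg01 : ∀ i j, sg i j ∈ Set.Icc (0 : ℝ) 1)
    (hsg1 : ∀ i j, 0 < w j * x i + b j → sg i j = 1)
    (hsg0 : ∀ i j, w j * x i + b j < 0 → sg i j = 0)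
    (hw' : ∀ j, v j ≠ 0 → w j = ∑ i, lam i * y i * v j * sg i j * x i)
    (hb' : ∀ j, v j ≠ 0 → b j = ∑ i, lam i * y i * v j * sg i j)
    (t1 t2 : ℝ) (h12 : t1 < t2)
    (hy1 : ∀ i, t1 ≤ x i → x i ≤ t2 → y i = 1)
    (hpos : ∀ i, t1 ≤ x i → x i ≤ t2 → 0 < t2 * x i + 1)
    (j1 j2 : Fin k) (hv1 : v j1 < 0) (hv2 : v j2 < 0)
    (hw1 : w j1 < 0) (hw2 : w j2 < 0)
    (hbp1 : w j1 * t1 + b j1 = 0) (hbp2 : w j2 * t2 + b j2 = 0) : False := by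
  refine pair_contra_pos (fun i => -x i) y (fun j => -w j) b v lam sg hlam hsg01
    (fun i j h => hsg1 i j (by simpa using h))
    (fun i j h => hsg0 i j (by simpa using h))
    (fun j hvj => by
      show -w j = ∑ i, lam i * y i * v j * sg i j * (-x i)
      have hneg : ∑ i, lam i * y i * v j * sg i j * (-x i) =
          -∑ i, lam i * y i * v j * sg i j * x i := by
        rw [← Finset.sum_neg_distrib]
        exact Finset.sum_congr rfl fun i _ => by ring
      rw [hneg, ← hw' j hvj])
    hb' (-t2) (-t1) (by linarith)
    (by
      intro i h1 h2
      have h1' : -t2 ≤ -x i := h1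
      have h2' : -x i ≤ -t1 := h2
      exact hy1 i (by linarith) (by linarith))
    (by
      intro i h1 h2
      have h1' : -t2 ≤ -x i := h1
      have h2' : -x i ≤ -t1 := h2
      show (0 : ℝ) < -t2 * -x i + 1
      have := hpos i (by linarith) (by linarith)
      nlinarith)
    j2 j1 hv2 hv1
    (by show (0 : ℝ) < -w j2; linarith)
    (by show (0 : ℝ) < -w j1; linarith)
    (by show -w j2 * -t2 + b j2 = 0; rw [neg_mul_neg]; exact hbp2)
    (by show -w j1 * -t1 + b j1 = 0; rw [neg_mul_neg]; exact hbp1)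

/-- With `ℐ'_{a,c} = {i : a ≤ i ≤ c, y_i N_θ(x_i) = 1}` enumerated by the
strictly monotone `idx : Fin m → Fin n`, there are at most `5` indices `ℓ` such that
`N_θ(z) < 1` for some `z ∈ [x_{i_ℓ}, x_{i_{ℓ+1}}]`. -/
theorem stmt4 {n k : ℕ} (x y : Fin n → ℝ)
    (hx : StrictMono x) (hy : ∀ i, y i = 1 ∨ y i = -1)
    (w b v : Fin k → ℝ) (hKKT : IsKKT x y w b v)
    (a c : Fin n) (hac : a < c) (ha : 0 ≤ x a) (hxac : x a < x c)
    (hyac : ∀ i, a ≤ i → i ≤ c → y i = 1)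
    (m : ℕ) (idx : Fin m → Fin n) (hmono : StrictMono idx)
    (hrange : ∀ i : Fin n,
      (a ≤ i ∧ i ≤ c ∧ y i * NNet w b v (x i) = 1) ↔ i ∈ Set.range idx) :
    {ℓ : ℕ | ∃ h : ℓ + 1 < m,
      ∃ z ∈ Set.Icc (x (idx ⟨ℓ, Nat.lt_of_succ_lt h⟩)) (x (idx ⟨ℓ + 1, h⟩)),
        NNet w b v z < 1}.encard ≤ 5 := by
  classical
  obtain ⟨hfeas, lam, sg, hlam, hsg01, hsg1, hsg0, hlam0, hw', hb'⟩ := hKKT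
  -- basic facts about points in the range of idx
  have hidx : ∀ s : Fin m, a ≤ idx s ∧ idx s ≤ c ∧ y (idx s) * NNet w b v (x (idx s)) = 1 :=
    fun s => (hrange (idx s)).mpr ⟨s, rfl⟩
  have hN1 : ∀ s : Fin m, NNet w b v (x (idx s)) = 1 := by
    intro s
    have h := (hidx s).2.2
    rwa [hyac _ (hidx s).1 (hidx s).2.1, one_mul] at h
  set S := {ℓ : ℕ | ∃ h : ℓ + 1 < m,
      ∃ z ∈ Set.Icc (x (idx ⟨ℓ, Nat.lt_of_succ_lt h⟩)) (x (idx ⟨ℓ + 1, h⟩)),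
        NNet w b v z < 1} with hSdef
  by_contra h5
  have h5' : 5 < S.encard := not_le.mp h5
  have hSsub : S ⊆ Set.Iio m := by
    intro ℓ hℓ
    simp only [hSdef, Set.mem_setOf_eq] at hℓ
    obtain ⟨h, _⟩ := hℓ
    exact Set.mem_Iio.mpr (Nat.lt_of_succ_lt h)
  have hfin : S.Finite := (Set.finite_Iio m).subset hSsub
  have hcard : 4 ≤ hfin.toFinset.card := by
    rw [hfin.encard_eq_coe_toFinset_card] at h5'
    have h6 : 5 < hfin.toFinset.card := by exact_mod_cast h5'
    omega
  obtain ⟨F, hFsub, hF4⟩ := Finset.exists_subset_card_eq (s := hfin.toFinset) hcard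
  set e := F.orderIsoOfFin hF4 with he
  have heS : ∀ r : Fin 4, ((e r : ℕ) ∈ S) := fun r => hfin.mem_toFinset.mp (hFsub (e r).2)
  have hemono : ∀ r r' : Fin 4, r < r' → ((e r : ℕ) < (e r' : ℕ)) := by
    intro r r' h
    exact Subtype.coe_lt_coe.mpr (e.lt_iff_lt.mpr h)
  -- extract the four dip witnesses
  have hmem : ∀ r : Fin 4, ∃ h : (e r : ℕ) + 1 < m,
      ∃ z ∈ Set.Icc (x (idx ⟨(e r : ℕ), Nat.lt_of_succ_lt h⟩))
        (x (idx ⟨(e r : ℕ) + 1, h⟩)), NNet w b v z < 1 := by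
    intro r
    have := heS r
    simpa only [hSdef, Set.mem_setOf_eq] using this
  obtain ⟨hm0, z0, hz0, hNz0⟩ := hmem 0
  obtain ⟨hm1, z1, hz1, hNz1⟩ := hmem 1
  obtain ⟨hm2, z2, hz2, hNz2⟩ := hmem 2
  obtain ⟨hm3, z3, hz3, hNz3⟩ := hmem 3
  -- bounds for the witnesses
  have hxalez : ∀ (r : Fin 4) (hr : (e r : ℕ) + 1 < m) (zz : ℝ),
      zz ∈ Set.Icc (x (idx ⟨(e r : ℕ), Nat.lt_of_succ_lt hr⟩))
        (x (idx ⟨(e r : ℕ) + 1, hr⟩)) → x a ≤ zz :=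
    fun r hr zz hzz => le_trans (hx.monotone (hidx ⟨(e r : ℕ), Nat.lt_of_succ_lt hr⟩).1) hzz.1
  have hzlexc : ∀ (r : Fin 4) (hr : (e r : ℕ) + 1 < m) (zz : ℝ),
      zz ∈ Set.Icc (x (idx ⟨(e r : ℕ), Nat.lt_of_succ_lt hr⟩))
        (x (idx ⟨(e r : ℕ) + 1, hr⟩)) → zz ≤ x c :=
    fun r hr zz hzz => le_trans hzz.2 (hx.monotone (hidx ⟨(e r : ℕ) + 1, hr⟩).2.1)
  -- for consecutive pairs, find the bad activation point
  have hbad : ∀ (r r' : Fin 4) (hr : (e r : ℕ) + 1 < m) (hr' : (e r' : ℕ) + 1 < m)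
      (zz zz' : ℝ), r < r' →
      zz ∈ Set.Icc (x (idx ⟨(e r : ℕ), Nat.lt_of_succ_lt hr⟩)) (x (idx ⟨(e r : ℕ) + 1, hr⟩)) →
      zz' ∈ Set.Icc (x (idx ⟨(e r' : ℕ), Nat.lt_of_succ_lt hr'⟩))
        (x (idx ⟨(e r' : ℕ) + 1, hr'⟩)) →
      NNet w b v zz < 1 → NNet w b v zz' < 1 →
      ∃ t ∈ Set.Ioo zz zz', ∃ j, v j < 0 ∧ w j ≠ 0 ∧ w j * t + b j = 0 := by
    intro r r' hr hr' zz zz' hrr' hzz hzz' hNzz hNzz'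
    have hq1 : NNet w b v (x (idx ⟨(e r : ℕ) + 1, hr⟩)) = 1 := hN1 _
    have hle1 : zz ≤ x (idx ⟨(e r : ℕ) + 1, hr⟩) := hzz.2
    have hle2 : x (idx ⟨(e r : ℕ) + 1, hr⟩) ≤ zz' := by
      refine le_trans ?_ hzz'.1
      apply hx.monotone
      apply hmono.monotone
      exact Fin.mk_le_mk.mpr (Nat.succ_le_of_lt (hemono r r' hrr'))
    exact dip_bad w b v hle1 hle2 hNzz hNzz' hq1
  obtain ⟨t0, ht0, j0, hvj0, hwj0, hbp0⟩ :=
    hbad 0 1 hm0 hm1 z0 z1 (by decide) hz0 hz1 hNz0 hNz1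
  obtain ⟨t1, ht1, j1, hvj1, hwj1, hbp1⟩ :=
    hbad 1 2 hm1 hm2 z1 z2 (by decide) hz1 hz2 hNz1 hNz2
  obtain ⟨t2, ht2, j2, hvj2, hwj2, hbp2⟩ :=
    hbad 2 3 hm2 hm3 z2 z3 (by decide) hz2 hz3 hNz2 hNz3
  -- ordering and positivity of the activation points
  have ht01 : t0 < t1 := lt_trans ht0.2 ht1.1
  have ht12 : t1 < t2 := lt_trans ht1.2 ht2.1
  have hxa0 : x a ≤ z0 := hxalez 0 hm0 z0 hz0
  have hxa1 : x a ≤ z1 := hxalez 1 hm1 z1 hz1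
  have hxa2 : x a ≤ z2 := hxalez 2 hm2 z2 hz2
  have hxc1 : z1 ≤ x c := hzlexc 1 hm1 z1 hz1
  have hxc2 : z2 ≤ x c := hzlexc 2 hm2 z2 hz2
  have hxc3 : z3 ≤ x c := hzlexc 3 hm3 z3 hz3
  have ht0pos : 0 < t0 := lt_of_le_of_lt (le_trans ha hxa0) ht0.1
  have ht1pos : 0 < t1 := lt_of_le_of_lt (le_trans ha hxa1) ht1.1
  have ht2pos : 0 < t2 := lt_of_le_of_lt (le_trans ha hxa2) ht2.1
  -- labels are 1 between the activation points
  have hy01 : ∀ i, t0 ≤ x i → x i ≤ t1 → y i = 1 := by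
    intro i h1 h2
    have hai : a < i := hx.lt_iff_lt.mp (lt_of_le_of_lt hxa0 (lt_of_lt_of_le ht0.1 h1))
    have hic : i < c := hx.lt_iff_lt.mp (lt_of_le_of_lt h2 (lt_of_lt_of_le ht1.2 hxc2))
    exact hyac i hai.le hic.le
  have hy12 : ∀ i, t1 ≤ x i → x i ≤ t2 → y i = 1 := by
    intro i h1 h2
    have hai : a < i := hx.lt_iff_lt.mp (lt_of_le_of_lt hxa1 (lt_of_lt_of_le ht1.1 h1))
    have hic : i < c := hx.lt_iff_lt.mp (lt_of_le_of_lt h2 (lt_of_lt_of_le ht2.2 hxc3))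
    exact hyac i hai.le hic.le
  have hy02 : ∀ i, t0 ≤ x i → x i ≤ t2 → y i = 1 := by
    intro i h1 h2
    have hai : a < i := hx.lt_iff_lt.mp (lt_of_le_of_lt hxa0 (lt_of_lt_of_le ht0.1 h1))
    have hic : i < c := hx.lt_iff_lt.mp (lt_of_le_of_lt h2 (lt_of_lt_of_le ht2.2 hxc3))
    exact hyac i hai.le hic.le
  -- the generic same-sign pair refutation
  have hpair : ∀ (t t' : ℝ) (j j' : Fin k), 0 < t → t < t' →
      (∀ i, t ≤ x i → x i ≤ t' → y i = 1) →
      v j < 0 → v j' < 0 → w j ≠ 0 → w j' ≠ 0 →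
      w j * t + b j = 0 → w j' * t' + b j' = 0 →
      ((0 < w j) ↔ (0 < w j')) → False := by
    intro t t' j j' htpos htt' hy' hvj hvj' hwj hwj' hbp hbp' hsame
    have hxipos : ∀ i, t ≤ x i → 0 < x i := fun i h => lt_of_lt_of_le htpos h
    have hpos1 : ∀ i, t ≤ x i → x i ≤ t' → 0 < t * x i + 1 := by
      intro i h1 _
      have := mul_pos htpos (hxipos i h1)
      linarith
    have hpos2 : ∀ i, t ≤ x i → x i ≤ t' → 0 < t' * x i + 1 := by
      intro i h1 _
      have := mul_pos (lt_trans htpos htt') (hxipos i h1)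
      linarith
    rcases lt_or_gt_of_ne hwj with hneg | hposw
    · have hneg' : w j' < 0 := by
        rcases lt_or_gt_of_ne hwj' with h | h
        · exact h
        · exact absurd (hsame.mpr h) (not_lt.mpr hneg.le)
      exact pair_contra_neg x y w b v lam sg hlam hsg01 hsg1 hsg0 hw' hb' t t' htt'
        hy' hpos2 j j' hvj hvj' hneg hneg' hbp hbp'
    · have hposw' : 0 < w j' := hsame.mp hposw
      exact pair_contra_pos x y w b v lam sg hlam hsg01 hsg1 hsg0 hw' hb' t t' htt'
        hy' hpos1 j j' hvj hvj' hposw hposw' hbp hbp'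
  -- pigeonhole on the sign of the three weights
  by_cases hs01 : (0 < w j0) ↔ (0 < w j1)
  · exact hpair t0 t1 j0 j1 ht0pos ht01 hy01 hvj0 hvj1 hwj0 hwj1 hbp0 hbp1 hs01
  · by_cases hs12 : (0 < w j1) ↔ (0 < w j2)
    · exact hpair t1 t2 j1 j2 ht1pos ht12 hy12 hvj1 hvj2 hwj1 hwj2 hbp1 hbp2 hs12
    · have hs02 : (0 < w j0) ↔ (0 < w j2) := by tauto
      exact hpair t0 t2 j0 j2 ht0pos (lt_trans ht01 ht12) hy02 hvj0 hvj2 hwj0 hwj2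
        hbp0 hbp2 hs02
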